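/- Let F be a field, G a finite group, and V and W two G-modules. Then topdeg F[V ⊕ W]_G ≤ topdeg F[V]_G + topdeg F[W]_G. In particular, topdeg F[V^m]_G ≤ m · topdeg F[V]_G for all positive integers m, where V^m is the direct sum of m copies of V. -/

import Mathlib

open MvPolynomial

variable {F G ι : Type*} [Field F] [Group G] [Fintype ι] [DecidableEq ι]

/-- The (left) action of a group element `σ` on the polynomial algebra
`F[V] = S(V^*)` presented as `MvPolynomial ι F`, for a matrix representation
`ρ : G →* GL(ι, F)` of `G` on `V = (ι → F)`.  It is given by `σ • f = f ∘ σ⁻¹`,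
i.e. by linear substitution of the variables using the matrix of `ρ σ⁻¹`. -/
noncomputable def polyAct (ρ : G →* (Matrix ι ι F)ˣ) (σ : G)
    (f : MvPolynomial ι F) : MvPolynomial ι F :=
  MvPolynomial.aeval
    (fun i => ∑ j, ((ρ σ⁻¹ : Matrix ι ι F) i j) • (MvPolynomial.X j : MvPolynomial ι F)) f

/-- A polynomial is invariant if it is fixed by the action of every group element. -/
def IsInv (ρ : G →* (Matrix ι ι F)ˣ) (f : MvPolynomial ι F) : Prop :=
  ∀ σ : G, polyAct ρ σ f = f

/-- The Hilbert ideal: the ideal of `F[V]` generated by the homogeneous invariants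
of positive degree. -/
noncomputable def hilbertIdeal (ρ : G →* (Matrix ι ι F)ˣ) : Ideal (MvPolynomial ι F) :=
  Ideal.span {f : MvPolynomial ι F | (∃ d, 0 < d ∧ f.IsHomogeneous d) ∧ IsInv ρ f}

/-- The top degree of the coinvariant algebra `F[V]_G = F[V]/(Hilbert ideal)`:
the largest degree `d` such that the degree-`d` homogeneous component of `F[V]_G`
is nonzero; since the Hilbert ideal is homogeneous this is the largest `d` for
which some homogeneous polynomial of degree `d` is not in the Hilbert ideal. -/
noncomputable def topDeg (ρ : G →* (Matrix ι ι F)ˣ) : ℕ :=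
  sSup {d : ℕ | ∃ f : MvPolynomial ι F, f.IsHomogeneous d ∧ f ∉ hilbertIdeal ρ}

/-- The dimension of the coinvariant algebra `F[V]_G` as an `F`-vector space. -/
noncomputable def coinvDim (ρ : G →* (Matrix ι ι F)ˣ) : ℕ :=
  Module.finrank F (MvPolynomial ι F ⧸ hilbertIdeal ρ)

/-- The representation of `G` on the direct sum `V ⊕ W` of two matrix
representations, given by block diagonal matrices. -/
noncomputable def glSum {κ : Type*} [Fintype κ] [DecidableEq κ]
    (ρV : G →* (Matrix ι ι F)ˣ) (ρW : G →* (Matrix κ κ F)ˣ) :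
    G →* (Matrix (ι ⊕ κ) (ι ⊕ κ) F)ˣ where
  toFun σ :=
    { val := Matrix.fromBlocks (ρV σ) 0 0 (ρW σ)
      inv := Matrix.fromBlocks (ρV σ⁻¹) 0 0 (ρW σ⁻¹)
      val_inv := by
        rw [Matrix.fromBlocks_multiply, ← Units.val_mul, ← Units.val_mul, ← map_mul,
          ← map_mul, mul_inv_cancel, map_one, map_one, Units.val_one, Units.val_one]
        simp
      inv_val := by
        rw [Matrix.fromBlocks_multiply, ← Units.val_mul, ← Units.val_mul, ← map_mul,
          ← map_mul, inv_mul_cancel, map_one, map_one, Units.val_one, Units.val_one]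
        simp }
  map_one' := by
    ext
    simp [Matrix.fromBlocks_one]
  map_mul' := by
    intro σ τ
    ext
    simp only [Units.val_mul, Matrix.fromBlocks_multiply, map_mul, mul_zero, zero_mul,
      add_zero, zero_add, Matrix.mul_zero, Matrix.zero_mul]

/-- The representation of `G` on the direct sum `V^m` of `m` copies of `V`,
given by block diagonal matrices. -/
noncomputable def glPow (ρ : G →* (Matrix ι ι F)ˣ) (m : ℕ) :
    G →* (Matrix (ι × Fin m) (ι × Fin m) F)ˣ :=
  (Units.map (Matrix.blockDiagonalRingHom ι (Fin m) F).toMonoidHom).comp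
    ((Units.map (Pi.constRingHom (Fin m) (Matrix ι ι F)).toMonoidHom).comp ρ)



section AuxLemmas
variable [Fintype G]

noncomputable def polyHom (ρ : G →* (Matrix ι ι F)ˣ) (σ : G) :
    MvPolynomial ι F →ₐ[F] MvPolynomial ι F :=
  MvPolynomial.aeval (fun i => ∑ j, ((ρ σ⁻¹ : Matrix ι ι F) i j) • (X j : MvPolynomial ι F))

lemma polyAct_eq (ρ : G →* (Matrix ι ι F)ˣ) (σ : G) (f : MvPolynomial ι F) :
    polyAct ρ σ f = polyHom ρ σ f := rfl

lemma polyHom_X (ρ : G →* (Matrix ι ι F)ˣ) (σ : G) (i : ι) :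
    polyHom ρ σ (X i) = ∑ j, ((ρ σ⁻¹ : Matrix ι ι F) i j) • (X j : MvPolynomial ι F) :=
  aeval_X _ _

lemma polyHom_one (ρ : G →* (Matrix ι ι F)ˣ) (f : MvPolynomial ι F) :
    polyHom ρ 1 f = f := by
  have : (fun i => ∑ j, ((ρ (1:G)⁻¹ : Matrix ι ι F) i j) • (X j : MvPolynomial ι F))
      = fun i => (X i : MvPolynomial ι F) := by
    funext i
    simp [Matrix.one_apply, ite_smul]
  rw [polyHom, this]
  simp [aeval_X_left]

lemma polyHom_comp (ρ : G →* (Matrix ι ι F)ˣ) (σ τ : G) (f : MvPolynomial ι F) :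
    polyHom ρ σ (polyHom ρ τ f) = polyHom ρ (σ * τ) f := by
  have : (polyHom ρ σ).comp (polyHom ρ τ) = polyHom ρ (σ * τ) := by
    apply MvPolynomial.algHom_ext
    intro i
    simp only [AlgHom.comp_apply, polyHom_X, map_sum, map_smul, Finset.smul_sum, smul_smul]
    rw [Finset.sum_comm]
    refine Finset.sum_congr rfl (fun k _ => ?_)
    rw [← Finset.sum_smul]
    congr 1
    rw [mul_inv_rev, map_mul, Units.val_mul, Matrix.mul_apply]
  rw [← this]; rfl

set_option maxHeartbeats 1000000 in
lemma polyHom_isHomogeneous (ρ : G →* (Matrix ι ι F)ˣ) (σ : G) {f : MvPolynomial ι F} {n : ℕ}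
    (hf : f.IsHomogeneous n) : (polyHom ρ σ f).IsHomogeneous n := by
  have hg : ∀ i, MvPolynomial.IsHomogeneous
      (∑ j, ((ρ σ⁻¹ : Matrix ι ι F) i j) • (X j : MvPolynomial ι F)) 1 := by
    intro i
    apply MvPolynomial.IsHomogeneous.sum
    intro j _
    rw [smul_eq_C_mul]
    exact isHomogeneous_C_mul_X _ _
  simpa only [one_mul, polyHom] using hf.aeval _ hg

/-- coefficients of a product of `X - C ℓ` with `ℓ` linear are homogeneous. -/
lemma coeff_prod_X_sub_C_homog {α : Type*} (s : Finset α) (ℓ : α → MvPolynomial ι F)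
    (hℓ : ∀ a, (ℓ a).IsHomogeneous 1) :
    ∀ k, ((∏ a ∈ s, (Polynomial.X - Polynomial.C (ℓ a))).coeff k).IsHomogeneous (s.card - k) := by
  classical
  induction s using Finset.induction_on with
  | empty =>
      intro k
      rcases Nat.eq_zero_or_pos k with hk | hk
      · subst hk; simpa using isHomogeneous_one ι F
      · simp only [Finset.prod_empty, Polynomial.coeff_one]
        rw [if_neg (by omega)]
        exact isHomogeneous_zero _ _ _
  | insert a s' ha ih =>
      intro k
      rw [Finset.prod_insert ha, Finset.card_insert_of_notMem ha]
      have hmonic : (∏ b ∈ s', (Polynomial.X - Polynomial.C (ℓ b))).Monic :=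
        Polynomial.monic_prod_of_monic _ _ (fun b _ => Polynomial.monic_X_sub_C _)
      have hdeg : (∏ b ∈ s', (Polynomial.X - Polynomial.C (ℓ b))).natDegree = s'.card := by
        rw [Polynomial.natDegree_prod_of_monic _ _ (fun b _ => Polynomial.monic_X_sub_C _)]
        simp [Polynomial.natDegree_X_sub_C]
      cases k with
      | zero =>
          rw [sub_mul, Polynomial.coeff_sub, Polynomial.mul_coeff_zero,
            Polynomial.mul_coeff_zero,
            Polynomial.coeff_X_zero, zero_mul, Polynomial.coeff_C_zero, zero_sub]
          have he : s'.card + 1 - 0 = 1 + (s'.card - 0) := by omega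
          rw [he]
          exact ((hℓ a).mul (ih 0)).neg
      | succ k =>
          rw [sub_mul, Polynomial.coeff_sub, Polynomial.coeff_X_mul, Polynomial.coeff_C_mul]
          apply MvPolynomial.IsHomogeneous.sub
          · have he : s'.card + 1 - (k + 1) = s'.card - k := by omega
            rw [he]
            exact ih k
          · rcases le_or_gt (k+1) s'.card with h | h
            · have he : s'.card + 1 - (k + 1) = 1 + (s'.card - (k+1)) := by omega
              rw [he]
              exact (hℓ a).mul (ih (k+1))
            · have : (∏ b ∈ s', (Polynomial.X - Polynomial.C (ℓ b))).coeff (k+1) = 0 :=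
                Polynomial.coeff_eq_zero_of_natDegree_lt (by omega)
              rw [this, mul_zero]
              exact isHomogeneous_zero _ _ _

noncomputable def normPoly (ρ : G →* (Matrix ι ι F)ˣ) (i : ι) :
    Polynomial (MvPolynomial ι F) :=
  ∏ σ : G, (Polynomial.X - Polynomial.C (polyHom ρ σ (X i)))

lemma normPoly_coeff_mem (ρ : G →* (Matrix ι ι F)ˣ) (i : ι) (k : ℕ)
    (hk : k < Fintype.card G) : (normPoly ρ i).coeff k ∈ hilbertIdeal ρ := by
  apply Ideal.subset_span
  constructor
  · refine ⟨Fintype.card G - k, by omega, ?_⟩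
    have := coeff_prod_X_sub_C_homog (Finset.univ : Finset G) (fun σ => polyHom ρ σ (X i))
      (fun σ => polyHom_isHomogeneous ρ σ (isHomogeneous_X F i)) k
    simpa [normPoly] using this
  · intro τ
    rw [polyAct_eq]
    have : polyHom ρ τ ((normPoly ρ i).coeff k)
        = ((normPoly ρ i).map (polyHom ρ τ).toRingHom).coeff k := by
      rw [Polynomial.coeff_map]; rfl
    rw [this]
    have hmap : (normPoly ρ i).map (polyHom ρ τ).toRingHom = normPoly ρ i := by
      rw [normPoly, Polynomial.map_prod]
      simp only [Polynomial.map_sub, Polynomial.map_X, Polynomial.map_C]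
      rw [show (∏ σ : G, (Polynomial.X - Polynomial.C
          ((polyHom ρ τ).toRingHom (polyHom ρ σ (X i)))))
          = ∏ σ : G, (Polynomial.X - Polynomial.C (polyHom ρ (τ * σ) (X i))) from
        Finset.prod_congr rfl (fun σ _ => by
          rw [show (polyHom ρ τ).toRingHom (polyHom ρ σ (X i))
            = polyHom ρ (τ * σ) (X i) from polyHom_comp ρ τ σ (X i)])]
      exact Fintype.prod_equiv (Equiv.mulLeft τ) _ _ (fun σ => rfl)
    rw [hmap]

lemma X_pow_card_mem (ρ : G →* (Matrix ι ι F)ˣ) (i : ι) :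
    (X i : MvPolynomial ι F) ^ Fintype.card G ∈ hilbertIdeal ρ := by
  have hmonic : (normPoly ρ i).Monic :=
    Polynomial.monic_prod_of_monic _ _ (fun b _ => Polynomial.monic_X_sub_C _)
  have hdeg : (normPoly ρ i).natDegree = Fintype.card G := by
    rw [normPoly, Polynomial.natDegree_prod_of_monic _ _
      (fun b _ => Polynomial.monic_X_sub_C _)]
    simp [Polynomial.natDegree_X_sub_C]
  have heval : (normPoly ρ i).eval (X i) = 0 := by
    rw [normPoly, Polynomial.eval_prod]
    apply Finset.prod_eq_zero (Finset.mem_univ (1 : G))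
    rw [Polynomial.eval_sub, Polynomial.eval_X, Polynomial.eval_C, polyHom_one, sub_self]
  have hsum := Polynomial.eval_eq_sum_range (p := normPoly ρ i) (x := (X i : MvPolynomial ι F))
  rw [heval, hdeg, Finset.sum_range_succ, ← hdeg, hmonic.coeff_natDegree, one_mul, hdeg] at hsum
  have : (X i : MvPolynomial ι F) ^ Fintype.card G
      = -∑ k ∈ Finset.range (Fintype.card G), (normPoly ρ i).coeff k * (X i) ^ k := by
    linear_combination -hsum
  rw [this]
  apply neg_mem
  apply Ideal.sum_mem
  intro k hk
  exact Ideal.mul_mem_right _ _ (normPoly_coeff_mem ρ i k (Finset.mem_range.mp hk))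

lemma Finsupp.degree_eq_univ_sum {η : Type*} [Fintype η] (s : η →₀ ℕ) :
    s.degree = ∑ x, s x := by
  rw [Finsupp.degree]
  exact Finset.sum_subset (Finset.subset_univ _)
    (fun x _ hx => Finsupp.notMem_support_iff.mp hx)

lemma monomial_mem_of_le (ρ : G →* (Matrix ι ι F)ˣ) {t s : ι →₀ ℕ} (c : F) (h : t ≤ s)
    (ht : (monomial t 1 : MvPolynomial ι F) ∈ hilbertIdeal ρ) :
    (monomial s c : MvPolynomial ι F) ∈ hilbertIdeal ρ := by
  have : (monomial s c : MvPolynomial ι F) = monomial t 1 * monomial (s - t) c := by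
    rw [monomial_mul, one_mul, add_tsub_cancel_of_le h]
  rw [this]
  exact Ideal.mul_mem_right _ _ ht

lemma homog_mem_of_big (ρ : G →* (Matrix ι ι F)ˣ) {d : ℕ} {f : MvPolynomial ι F}
    (hf : f.IsHomogeneous d) (hd : Fintype.card ι * (Fintype.card G - 1) < d) :
    f ∈ hilbertIdeal ρ := by
  rw [← f.support_sum_monomial_coeff]
  apply Ideal.sum_mem
  intro s hs
  have hdeg : s.degree = d := by
    rw [Finsupp.degree_eq_weight_one]
    exact hf (MvPolynomial.mem_support_iff.mp hs)
  have hex : ∃ i, Fintype.card G ≤ s i := by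
    by_contra hno
    push_neg at hno
    have h1 : s.degree ≤ Fintype.card ι * (Fintype.card G - 1) := by
      rw [Finsupp.degree_eq_univ_sum]
      calc ∑ x, s x ≤ ∑ _x : ι, (Fintype.card G - 1) :=
            Finset.sum_le_sum (fun i _ => by have := hno i; omega)
        _ = Fintype.card ι * (Fintype.card G - 1) := by
            rw [Finset.sum_const, Finset.card_univ, smul_eq_mul]
    omega
  obtain ⟨i, hi⟩ := hex
  apply monomial_mem_of_le ρ _ (t := Finsupp.single i (Fintype.card G))
  · intro j
    rcases eq_or_ne j i with rfl | hj
    · simpa using hi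
    · simp [Finsupp.single_apply, Ne.symm hj]
  · rw [← MvPolynomial.X_pow_eq_monomial]
    exact X_pow_card_mem ρ i

lemma bddAbove_homogSet (ρ : G →* (Matrix ι ι F)ˣ) :
    BddAbove {d : ℕ | ∃ f : MvPolynomial ι F, f.IsHomogeneous d ∧ f ∉ hilbertIdeal ρ} := by
  refine ⟨Fintype.card ι * (Fintype.card G - 1), ?_⟩
  rintro d ⟨f, hf, hfI⟩
  by_contra hlt
  push_neg at hlt
  exact hfI (homog_mem_of_big ρ hf hlt)

lemma homog_mem_of_topDeg_lt (ρ : G →* (Matrix ι ι F)ˣ) {d : ℕ} {f : MvPolynomial ι F}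
    (hf : f.IsHomogeneous d) (hd : topDeg ρ < d) : f ∈ hilbertIdeal ρ := by
  by_contra h
  have hmem : d ∈ {d : ℕ | ∃ f : MvPolynomial ι F, f.IsHomogeneous d ∧ f ∉ hilbertIdeal ρ} :=
    ⟨f, hf, h⟩
  have := le_csSup (bddAbove_homogSet ρ) hmem
  rw [topDeg] at hd
  omega

section SumLemmas

variable {κ : Type*} [Fintype κ] [DecidableEq κ]
variable (ρV : G →* (Matrix ι ι F)ˣ) (ρW : G →* (Matrix κ κ F)ˣ)

lemma glSum_coe (σ : G) :
    ((glSum ρV ρW σ : (Matrix (ι ⊕ κ) (ι ⊕ κ) F)ˣ) : Matrix (ι ⊕ κ) (ι ⊕ κ) F)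
      = Matrix.fromBlocks (ρV σ) 0 0 (ρW σ) := rfl

lemma polyHom_glSum_inl (τ : G) (g : MvPolynomial ι F) :
    polyHom (glSum ρV ρW) τ (rename Sum.inl g) = rename Sum.inl (polyHom ρV τ g) := by
  have h : (polyHom (glSum ρV ρW) τ).comp
        (rename Sum.inl : MvPolynomial ι F →ₐ[F] MvPolynomial (ι ⊕ κ) F)
      = (rename (Sum.inl : ι → ι ⊕ κ)).comp (polyHom ρV τ) := by
    apply MvPolynomial.algHom_ext
    intro i
    simp only [AlgHom.comp_apply, rename_X, polyHom_X, glSum_coe, map_sum, map_smul]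
    rw [Fintype.sum_sum_type]
    simp [Matrix.fromBlocks_apply₁₁, Matrix.fromBlocks_apply₁₂]
  exact DFunLike.congr_fun h g

lemma polyHom_glSum_inr (τ : G) (g : MvPolynomial κ F) :
    polyHom (glSum ρV ρW) τ (rename Sum.inr g) = rename Sum.inr (polyHom ρW τ g) := by
  have h : (polyHom (glSum ρV ρW) τ).comp
        (rename Sum.inr : MvPolynomial κ F →ₐ[F] MvPolynomial (ι ⊕ κ) F)
      = (rename (Sum.inr : κ → ι ⊕ κ)).comp (polyHom ρW τ) := by
    apply MvPolynomial.algHom_ext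
    intro i
    simp only [AlgHom.comp_apply, rename_X, polyHom_X, glSum_coe, map_sum, map_smul]
    rw [Fintype.sum_sum_type]
    simp [Matrix.fromBlocks_apply₂₁, Matrix.fromBlocks_apply₂₂]
  exact DFunLike.congr_fun h g

lemma rename_inl_mem {f : MvPolynomial ι F} (hf : f ∈ hilbertIdeal ρV) :
    rename Sum.inl f ∈ hilbertIdeal (glSum ρV ρW) := by
  have hle : hilbertIdeal ρV ≤ Ideal.comap
      ((rename Sum.inl : MvPolynomial ι F →ₐ[F] MvPolynomial (ι ⊕ κ) F) : _ →+* _)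
      (hilbertIdeal (glSum ρV ρW)) := by
    rw [hilbertIdeal, Ideal.span_le]
    rintro g ⟨⟨d, hd, hgh⟩, hginv⟩
    show rename Sum.inl g ∈ hilbertIdeal (glSum ρV ρW)
    apply Ideal.subset_span
    refine ⟨⟨d, hd, hgh.rename_isHomogeneous⟩, fun τ => ?_⟩
    show polyHom (glSum ρV ρW) τ (rename Sum.inl g) = rename Sum.inl g
    rw [polyHom_glSum_inl, ← polyAct_eq, hginv τ]
  exact hle hf

lemma rename_inr_mem {f : MvPolynomial κ F} (hf : f ∈ hilbertIdeal ρW) :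
    rename Sum.inr f ∈ hilbertIdeal (glSum ρV ρW) := by
  have hle : hilbertIdeal ρW ≤ Ideal.comap
      ((rename Sum.inr : MvPolynomial κ F →ₐ[F] MvPolynomial (ι ⊕ κ) F) : _ →+* _)
      (hilbertIdeal (glSum ρV ρW)) := by
    rw [hilbertIdeal, Ideal.span_le]
    rintro g ⟨⟨d, hd, hgh⟩, hginv⟩
    show rename Sum.inr g ∈ hilbertIdeal (glSum ρV ρW)
    apply Ideal.subset_span
    refine ⟨⟨d, hd, hgh.rename_isHomogeneous⟩, fun τ => ?_⟩
    show polyHom (glSum ρV ρW) τ (rename Sum.inr g) = rename Sum.inr g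
    rw [polyHom_glSum_inr, ← polyAct_eq, hginv τ]
  exact hle hf

lemma glSum_homog_mem {d : ℕ} {f : MvPolynomial (ι ⊕ κ) F} (hf : f.IsHomogeneous d)
    (hd : topDeg ρV + topDeg ρW < d) : f ∈ hilbertIdeal (glSum ρV ρW) := by
  rw [← f.support_sum_monomial_coeff]
  apply Ideal.sum_mem
  intro s hs
  have hdeg : (∑ i, s (Sum.inl i)) + (∑ k, s (Sum.inr k)) = d := by
    have h1 := hf (MvPolynomial.mem_support_iff.mp hs)
    rw [Pi.one_def, ← Finsupp.degree_eq_weight_one, Finsupp.degree_eq_univ_sum, Fintype.sum_sum_type] at h1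
    exact h1
  rcases lt_or_ge (topDeg ρV) (∑ i, s (Sum.inl i)) with hc | hc
  · set t : ι →₀ ℕ := Finsupp.comapDomain Sum.inl s Sum.inl_injective.injOn with ht
    have htdeg : t.degree = ∑ i, s (Sum.inl i) := by
      rw [Finsupp.degree_eq_univ_sum]; rfl
    have hmem : (monomial t 1 : MvPolynomial ι F) ∈ hilbertIdeal ρV :=
      homog_mem_of_topDeg_lt ρV (isHomogeneous_monomial 1 rfl) (by omega)
    have hmem2 := rename_inl_mem ρV ρW hmem
    rw [rename_monomial] at hmem2
    apply monomial_mem_of_le _ _ _ hmem2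
    intro x
    cases x with
    | inl j =>
        rw [Finsupp.mapDomain_apply Sum.inl_injective]
        exact le_rfl
    | inr k =>
        rw [Finsupp.mapDomain_notin_range]
        · exact Nat.zero_le _
        · simp
  · have hc2 : topDeg ρW < ∑ k, s (Sum.inr k) := by omega
    set t : κ →₀ ℕ := Finsupp.comapDomain Sum.inr s Sum.inr_injective.injOn with ht
    have htdeg : t.degree = ∑ k, s (Sum.inr k) := by
      rw [Finsupp.degree_eq_univ_sum]; rfl
    have hmem : (monomial t 1 : MvPolynomial κ F) ∈ hilbertIdeal ρW :=
      homog_mem_of_topDeg_lt ρW (isHomogeneous_monomial 1 rfl) (by omega)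
    have hmem2 := rename_inr_mem ρV ρW hmem
    rw [rename_monomial] at hmem2
    apply monomial_mem_of_le _ _ _ hmem2
    intro x
    cases x with
    | inl j =>
        rw [Finsupp.mapDomain_notin_range]
        · exact Nat.zero_le _
        · simp
    | inr k =>
        rw [Finsupp.mapDomain_apply Sum.inr_injective]
        exact le_rfl

end SumLemmas

section PowLemmas

variable (ρ : G →* (Matrix ι ι F)ˣ) (m : ℕ)

lemma glPow_coe (σ : G) :
    ((glPow ρ m σ : (Matrix (ι × Fin m) (ι × Fin m) F)ˣ) : Matrix (ι × Fin m) (ι × Fin m) F)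
      = Matrix.blockDiagonal (fun _ => (ρ σ : Matrix ι ι F)) := rfl

lemma finProdInj (a : Fin m) : Function.Injective (fun i : ι => (i, a)) :=
  fun x y h => by simpa using congrArg Prod.fst h

lemma polyHom_glPow (a : Fin m) (τ : G) (g : MvPolynomial ι F) :
    polyHom (glPow ρ m) τ (rename (fun i => (i, a)) g)
      = rename (fun i => (i, a)) (polyHom ρ τ g) := by
  have h : (polyHom (glPow ρ m) τ).comp
        (rename (fun i => (i, a)) : MvPolynomial ι F →ₐ[F] MvPolynomial (ι × Fin m) F)
      = (rename (fun i : ι => (i, a))).comp (polyHom ρ τ) := by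
    apply MvPolynomial.algHom_ext
    intro i
    simp only [AlgHom.comp_apply, rename_X, polyHom_X, glPow_coe, map_sum, map_smul]
    rw [Fintype.sum_prod_type]
    simp [Matrix.blockDiagonal_apply, ite_smul]
  exact DFunLike.congr_fun h g

lemma rename_pow_mem (a : Fin m) {f : MvPolynomial ι F} (hf : f ∈ hilbertIdeal ρ) :
    rename (fun i => (i, a)) f ∈ hilbertIdeal (glPow ρ m) := by
  have hle : hilbertIdeal ρ ≤ Ideal.comap
      ((rename (fun i => (i, a)) : MvPolynomial ι F →ₐ[F] MvPolynomial (ι × Fin m) F) : _ →+* _)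
      (hilbertIdeal (glPow ρ m)) := by
    rw [hilbertIdeal, Ideal.span_le]
    rintro g ⟨⟨d, hd, hgh⟩, hginv⟩
    show rename (fun i => (i, a)) g ∈ hilbertIdeal (glPow ρ m)
    apply Ideal.subset_span
    refine ⟨⟨d, hd, hgh.rename_isHomogeneous⟩, fun τ => ?_⟩
    show polyHom (glPow ρ m) τ (rename (fun i => (i, a)) g) = rename (fun i => (i, a)) g
    rw [polyHom_glPow, ← polyAct_eq, hginv τ]
  exact hle hf

lemma glPow_homog_mem {d : ℕ} {f : MvPolynomial (ι × Fin m) F} (hf : f.IsHomogeneous d)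
    (hd : m * topDeg ρ < d) : f ∈ hilbertIdeal (glPow ρ m) := by
  rw [← f.support_sum_monomial_coeff]
  apply Ideal.sum_mem
  intro s hs
  have hdeg : ∑ a : Fin m, ∑ i : ι, s (i, a) = d := by
    have h1 := hf (MvPolynomial.mem_support_iff.mp hs)
    rw [Pi.one_def, ← Finsupp.degree_eq_weight_one, Finsupp.degree_eq_univ_sum,
      Fintype.sum_prod_type_right] at h1
    exact h1
  have hex : ∃ a : Fin m, topDeg ρ < ∑ i : ι, s (i, a) := by
    by_contra hno
    push_neg at hno
    have : ∑ a : Fin m, ∑ i : ι, s (i, a) ≤ m * topDeg ρ := by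
      calc ∑ a : Fin m, ∑ i : ι, s (i, a) ≤ ∑ _a : Fin m, topDeg ρ :=
            Finset.sum_le_sum (fun a _ => hno a)
        _ = m * topDeg ρ := by
            rw [Finset.sum_const, Finset.card_univ, Fintype.card_fin, smul_eq_mul]
    omega
  obtain ⟨a, ha⟩ := hex
  set t : ι →₀ ℕ := Finsupp.comapDomain (fun i => (i, a)) s (finProdInj m a).injOn with ht
  have htdeg : t.degree = ∑ i : ι, s (i, a) := by
    rw [Finsupp.degree_eq_univ_sum]; rfl
  have hmem : (monomial t 1 : MvPolynomial ι F) ∈ hilbertIdeal ρ :=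
    homog_mem_of_topDeg_lt ρ (isHomogeneous_monomial 1 rfl) (by omega)
  have hmem2 := rename_pow_mem ρ m a hmem
  rw [rename_monomial] at hmem2
  apply monomial_mem_of_le _ _ _ hmem2
  intro x
  rcases x with ⟨j, b⟩
  rcases eq_or_ne b a with rfl | hb
  · rw [show ((j, b) : ι × Fin m) = (fun i : ι => (i, b)) j from rfl,
      Finsupp.mapDomain_apply (finProdInj m b)]
    exact le_rfl
  · rw [Finsupp.mapDomain_notin_range]
    · exact Nat.zero_le _
    · rintro ⟨y, hy⟩
      have := congrArg Prod.snd hy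
      simp only at this
      exact hb this.symm

end PowLemmas

end AuxLemmas

/-- `topdeg F[V ⊕ W]_G ≤ topdeg F[V]_G + topdeg F[W]_G`; in
particular `topdeg F[V^m]_G ≤ m · topdeg F[V]_G` for all `m`. -/
theorem topDeg_sum_le [Fintype G] {κ : Type*} [Fintype κ] [DecidableEq κ]
    (ρV : G →* (Matrix ι ι F)ˣ) (ρW : G →* (Matrix κ κ F)ˣ) :
    topDeg (glSum ρV ρW) ≤ topDeg ρV + topDeg ρW ∧
      ∀ m : ℕ, topDeg (glPow ρV m) ≤ m * topDeg ρV := by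
  constructor
  · apply csSup_le'
    rintro d ⟨f, hf, hfI⟩
    by_contra hlt
    push_neg at hlt
    exact hfI (glSum_homog_mem ρV ρW hf hlt)
  · intro m
    apply csSup_le'
    rintro d ⟨f, hf, hfI⟩
    by_contra hlt
    push_neg at hlt
    exact hfI (glPow_homog_mem ρV m hf hlt)
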